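/- For every integer m ≥ 3, the orbit of the initial value 2^m − 1 under Q goes to infinity: Q^n(2^m − 1) → ∞ as n → ∞. -/

import Mathlib

/-- The divide-or-choose-2 map: `Q n = n/2` if `n` is even, `Q n = n*(n-1)/2` if `n` is odd. -/
def Q (n : ℕ) : ℕ := if n % 2 = 0 then n / 2 else n * (n - 1) / 2

namespace Stmt16

/-- odd part -/
def φ (y : ℕ) : ℕ := ordCompl[2] y

lemma phi_odd {y : ℕ} (h : y % 2 = 1) : φ y = y := by
  unfold φ
  rw [Nat.factorization_eq_zero_of_not_dvd (by omega)]
  simp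

lemma phi_two_mul (y : ℕ) : φ (2 * y) = φ y := by
  unfold φ
  rw [Nat.ordCompl_mul]
  rw [show (Nat.factorization 2) 2 = 1 from Nat.Prime.factorization_self Nat.prime_two]
  simp

lemma phi_mul (a b : ℕ) : φ (a * b) = φ a * φ b := Nat.ordCompl_mul a b 2

lemma phi_le (y : ℕ) : φ y ≤ y := Nat.ordCompl_le y 2

lemma phi_pos {y : ℕ} (hy : 0 < y) : 0 < φ y := Nat.ordCompl_pos 2 hy.ne'

lemma phi_odd' {y : ℕ} (hy : 0 < y) : φ y % 2 = 1 := by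
  have h := Nat.two_dvd_ne_zero.mp (Nat.not_dvd_ordCompl Nat.prime_two hy.ne')
  exact h

/-- if φ y = 1 then y is a power of 2 -/
lemma phi_eq_one {y : ℕ} (h : φ y = 1) : ∃ a, y = 2 ^ a := by
  refine ⟨y.factorization 2, ?_⟩
  have := Nat.ordProj_mul_ordCompl_eq_self y 2
  rw [show ordCompl[2] y = 1 from h] at this
  omega

section Main

variable {x : ℕ} (hx : 7 ≤ x) (hA : ∀ a, ¬ x ∣ 2 ^ a + 1)

/-- invariant -/
def P (x y : ℕ) : Prop := 0 < y ∧ x ∣ φ y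

include hx hA in
lemma step {y : ℕ} (hP : P x y) : P x (Q y) ∧ φ y ≤ φ (Q y) ∧ (y % 2 = 1 → 3 * φ y ≤ φ (Q y)) := by
  obtain ⟨hy, hdvd⟩ := hP
  rcases Nat.even_or_odd y with he | ho
  · -- even case
    have h2 : y % 2 = 0 := Nat.even_iff.mp he
    have hq : Q y = y / 2 := by simp [Q, h2]
    have hy2 : y = 2 * (y / 2) := by omega
    have hphi : φ (Q y) = φ y := by rw [hq]; conv_rhs => rw [hy2]; rw [phi_two_mul]
    refine ⟨⟨by omega, by rw [hphi]; exact hdvd⟩, by omega, by omega⟩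
  · -- odd case
    have h2 : y % 2 = 1 := Nat.odd_iff.mp ho
    have hphiy : φ y = y := phi_odd h2
    have hxy : x ∣ y := hphiy ▸ hdvd
    have hyx : x ≤ y := Nat.le_of_dvd hy hxy
    have hq : Q y = y * ((y - 1) / 2) := by
      simp only [Q, h2]
      rw [Nat.mul_div_assoc y (by omega : 2 ∣ y - 1)]
      simp
    have hym1 : y - 1 = 2 * ((y - 1) / 2) := by omega
    have hc : φ ((y - 1) / 2) = φ (y - 1) := by conv_rhs => rw [hym1, phi_two_mul]
    have hphiq : φ (Q y) = y * φ (y - 1) := by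
      rw [hq, phi_mul, hphiy, hc]
    -- φ (y-1) ≥ 3
    have hpos1 : 0 < y - 1 := by omega
    have hodd1 : φ (y - 1) % 2 = 1 := phi_odd' hpos1
    have hne1 : φ (y - 1) ≠ 1 := by
      intro h1
      obtain ⟨a, ha⟩ := phi_eq_one h1
      exact hA a (by rw [show 2 ^ a + 1 = y by omega]; exact hxy)
    have h3 : 3 ≤ φ (y - 1) := by omega
    have hle : 3 * φ y ≤ φ (Q y) := by
      rw [hphiq, hphiy]
      calc 3 * y = y * 3 := by ring
        _ ≤ y * φ (y - 1) := Nat.mul_le_mul_left y h3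
    refine ⟨⟨?_, ?_⟩, by omega, fun _ => hle⟩
    · rw [hq]; exact Nat.mul_pos hy (by omega)
    · rw [hphiq]; exact hxy.mul_right _

include hx hA in
lemma orbit_mono {y : ℕ} (hP : P x y) : ∀ i, P x (Q^[i] y) ∧ φ y ≤ φ (Q^[i] y) := by
  intro i
  induction i with
  | zero => exact ⟨hP, le_refl _⟩
  | succ n ih =>
    obtain ⟨hPn, hle⟩ := ih
    obtain ⟨hP', hle', _⟩ := step hx hA hPn
    rw [Function.iterate_succ_apply']
    exact ⟨hP', le_trans hle hle'⟩

/-- from any positive y, reach an odd value with same φ -/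
lemma reach_odd : ∀ y : ℕ, 0 < y → ∃ j, (Q^[j] y) % 2 = 1 ∧ φ (Q^[j] y) = φ y ∧ 0 < Q^[j] y := by
  intro y
  induction y using Nat.strong_induction_on with
  | _ y ih =>
    intro hy
    rcases Nat.even_or_odd y with he | ho
    · have h2 : y % 2 = 0 := Nat.even_iff.mp he
      have hq : Q y = y / 2 := by simp [Q, h2]
      have hlt : y / 2 < y := by omega
      obtain ⟨j, hj1, hj2, hj3⟩ := ih (y / 2) hlt (by omega)
      refine ⟨j + 1, ?_, ?_, ?_⟩
      · rw [Function.iterate_succ_apply, hq]; exact hj1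
      · rw [Function.iterate_succ_apply, hq, hj2]
        have hy2 : y = 2 * (y / 2) := by omega
        conv_rhs => rw [hy2, phi_two_mul]
      · rw [Function.iterate_succ_apply, hq]; exact hj3
    · exact ⟨0, Nat.odd_iff.mp ho, rfl, hy⟩

include hx hA in
lemma growth {y : ℕ} (hP : P x y) : ∃ j, P x (Q^[j] y) ∧ 3 * φ y ≤ φ (Q^[j] y) := by
  obtain ⟨j, hodd, hphi, hpos⟩ := reach_odd y hP.1
  have hPj : P x (Q^[j] y) := (orbit_mono hx hA hP j).1
  obtain ⟨hP', _, h3⟩ := step hx hA hPj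
  refine ⟨j + 1, ?_, ?_⟩
  · rw [Function.iterate_succ_apply']; exact hP'
  · rw [Function.iterate_succ_apply']
    calc 3 * φ y = 3 * φ (Q^[j] y) := by rw [hphi]
      _ ≤ _ := h3 hodd

include hx hA in
lemma main (hP : P x x) : ∀ t : ℕ, ∃ k, P x (Q^[k] x) ∧ 3 ^ t ≤ φ (Q^[k] x) := by
  intro t
  induction t with
  | zero => exact ⟨0, hP, by rw [pow_zero]; exact phi_pos hP.1⟩
  | succ n ih =>
    obtain ⟨k, hPk, hle⟩ := ih
    obtain ⟨j, hPj, h3⟩ := growth hx hA hPk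
    refine ⟨j + k, ?_, ?_⟩
    · rw [Function.iterate_add_apply]; exact hPj
    · rw [Function.iterate_add_apply]
      calc 3 ^ (n + 1) = 3 * 3 ^ n := by ring
        _ ≤ 3 * φ (Q^[k] x) := by omega
        _ ≤ _ := h3

end Main

lemma no_dvd_pow_add_one (m : ℕ) (hm : 3 ≤ m) (a : ℕ) : ¬ (2 ^ m - 1 ∣ 2 ^ a + 1) := by
  intro h
  set x := 2 ^ m - 1 with hxdef
  have hm1 : (4 : ℕ) ≤ 2 ^ (m - 1) := by
    calc (4 : ℕ) = 2 ^ 2 := by norm_num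
      _ ≤ 2 ^ (m - 1) := Nat.pow_le_pow_right (by norm_num) (by omega)
  have hmm : 2 ^ m = 2 * 2 ^ (m - 1) := by
    rw [← pow_succ']
    congr 1
    omega
  have hxpos : 0 < x := by omega
  -- 2^a ≡ 2^(a % m) mod x
  have hmod : (2 : ℕ) ^ m ≡ 1 [MOD x] := by
    have : 2 ^ m - 1 ≡ 0 [MOD x] := (Nat.modEq_zero_iff_dvd).mpr dvd_rfl
    calc (2:ℕ) ^ m = (2 ^ m - 1) + 1 := by omega
      _ ≡ 0 + 1 [MOD x] := Nat.ModEq.add_right 1 this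
      _ = 1 := by ring
  have hpow : (2 : ℕ) ^ a ≡ 2 ^ (a % m) [MOD x] := by
    conv_lhs => rw [show a = m * (a / m) + a % m from (Nat.div_add_mod a m).symm]
    rw [pow_add, pow_mul]
    calc ((2:ℕ) ^ m) ^ (a / m) * 2 ^ (a % m)
        ≡ 1 ^ (a / m) * 2 ^ (a % m) [MOD x] := Nat.ModEq.mul_right _ (hmod.pow _)
      _ = 2 ^ (a % m) := by ring
  have hdvd : x ∣ 2 ^ (a % m) + 1 := by
    have h1 : (2:ℕ) ^ a + 1 ≡ 2 ^ (a % m) + 1 [MOD x] := hpow.add_right 1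
    have h2 : (2:ℕ) ^ a + 1 ≡ 0 [MOD x] := (Nat.modEq_zero_iff_dvd).mpr h
    exact (Nat.modEq_zero_iff_dvd).mp (h1.symm.trans h2)
  have hr : a % m ≤ m - 1 := by
    have := Nat.mod_lt a (show 0 < m by omega)
    omega
  have hb : (2:ℕ) ^ (a % m) ≤ 2 ^ (m - 1) := Nat.pow_le_pow_right (by norm_num) hr
  have hposr : 0 < (2:ℕ) ^ (a % m) := Nat.pow_pos (by norm_num)
  have hled := Nat.le_of_dvd (by omega) hdvd
  omega

end Stmt16

/-- For every integer `m ≥ 3`, the orbit of `2^m - 1` under `Q` goes to infinity. -/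
theorem stmt_16 (m : ℕ) (hm : 3 ≤ m) :
    Filter.Tendsto (fun n : ℕ => Q^[n] (2 ^ m - 1)) Filter.atTop Filter.atTop := by
  set x := 2 ^ m - 1 with hxdef
  have h8 : (8 : ℕ) ≤ 2 ^ m := by
    calc (8 : ℕ) = 2 ^ 3 := by norm_num
      _ ≤ 2 ^ m := Nat.pow_le_pow_right (by norm_num) hm
  have hx : 7 ≤ x := by omega
  have hA : ∀ a, ¬ x ∣ 2 ^ a + 1 := Stmt16.no_dvd_pow_add_one m hm
  have hxodd : x % 2 = 1 := by
    have : 2 ^ m % 2 = 0 := by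
      have : (2:ℕ) ∣ 2 ^ m := dvd_pow_self 2 (by omega)
      omega
    omega
  have hPx : Stmt16.P x x := ⟨by omega, by rw [Stmt16.phi_odd hxodd]⟩
  rw [Filter.tendsto_atTop]
  intro N
  obtain ⟨k, hPk, hle⟩ := Stmt16.main hx hA hPx N
  rw [Filter.eventually_atTop]
  refine ⟨k, fun n hn => ?_⟩
  have hsplit : Q^[n] x = Q^[n - k] (Q^[k] x) := by
    rw [← Function.iterate_add_apply]
    congr 1
    omega
  have hmono := (Stmt16.orbit_mono hx hA hPk (n - k)).2
  have hPn : Stmt16.P x (Q^[n] x) := hsplit ▸ (Stmt16.orbit_mono hx hA hPk (n - k)).1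
  have h1 : 3 ^ N ≤ Stmt16.φ (Q^[n] x) := by
    rw [hsplit]
    omega
  have h2 : Stmt16.φ (Q^[n] x) ≤ Q^[n] x := Stmt16.phi_le _
  have h3 : N < 3 ^ N := Nat.lt_pow_self (by norm_num)
  omega
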